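/- Let f be a smooth real-valued function on an open interval I ⊆ ℝ with f'' nowhere vanishing. On the open set Ω = {(X,Y,P,Q,q) ∈ ℝ⁵ : X ∈ I, q ≠ Q}, define the change of coordinates x = −P + q f'(X)/f''(X), y = −q/f''(X), z = Y − P X + q (X f'(X) − f(X))/f''(X), p = X, r = 1/(q − Q). Then the 1-form dz − p dx − f(p) dy equals dY − P dX on Ω; explicitly, for each coordinate u ∈ {X, Y, P, Q, q}: ∂z/∂u − p · ∂x/∂u − f(p) · ∂y/∂u equals −P when u = X, equals 1 when u = Y, and equals 0 when u = P, u = Q, or u = q. -/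

import Mathlib

noncomputable def prj (i : Fin 5) : (Fin 5 → ℝ) →L[ℝ] ℝ := ContinuousLinearMap.proj i

@[simp] lemma prj_apply (i : Fin 5) (w : Fin 5 → ℝ) : prj i w = w i := rfl


/-- Partial derivative of a function on `ℝ⁵` (coordinates `(X,Y,P,Q,q)` indexed `0,…,4`)
in the `i`-th coordinate direction. -/
noncomputable def pd (i : Fin 5) (F : (Fin 5 → ℝ) → ℝ) (v : Fin 5 → ℝ) : ℝ :=
  fderiv ℝ F v (Pi.single i 1)

/-- Under the coordinate change
`x = −P + q f'(X)/f''(X)`, `y = −q/f''(X)`, `z = Y − PX + q(Xf'(X) − f(X))/f''(X)`, `p = X`,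
the contact form `dz − p dx − f(p) dy` equals `dY − P dX` on
`Ω = {(X,Y,P,Q,q) : X ∈ I, q ≠ Q}`: its component in each coordinate direction
`X, Y, P, Q, q` is `−P, 1, 0, 0, 0` respectively. -/
theorem contact_form_in_new_coordinates
    (I : Set ℝ) (hI : IsOpen I) (hI' : Convex ℝ I)
    (f : ℝ → ℝ) (hf : ContDiffOn ℝ (⊤ : ℕ∞) f I)
    (hnd : ∀ x ∈ I, iteratedDeriv 2 f x ≠ 0)
    (x y z p : (Fin 5 → ℝ) → ℝ)
    (hx : x = fun v => -(v 2) + v 4 * deriv f (v 0) / iteratedDeriv 2 f (v 0))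
    (hy : y = fun v => -(v 4) / iteratedDeriv 2 f (v 0))
    (hz : z = fun v => v 1 - v 2 * v 0
      + v 4 * (v 0 * deriv f (v 0) - f (v 0)) / iteratedDeriv 2 f (v 0))
    (hp : p = fun v => v 0) :
    ∀ v : Fin 5 → ℝ, v 0 ∈ I → v 4 ≠ v 3 →
      (pd 0 z v - p v * pd 0 x v - f (p v) * pd 0 y v = -(v 2)) ∧
      (pd 1 z v - p v * pd 1 x v - f (p v) * pd 1 y v = 1) ∧
      (pd 2 z v - p v * pd 2 x v - f (p v) * pd 2 y v = 0) ∧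
      (pd 3 z v - p v * pd 3 x v - f (p v) * pd 3 y v = 0) ∧
      (pd 4 z v - p v * pd 4 x v - f (p v) * pd 4 y v = 0) := by
  have hit2 : iteratedDeriv 2 f = deriv (deriv f) := by
    rw [iteratedDeriv_succ, iteratedDeriv_one]
  -- rewrite the coordinate functions into a convenient form
  have hx2 : x = fun v : Fin 5 → ℝ =>
      -(v 2) + v 4 * (fun s => deriv f s / deriv (deriv f) s) (v 0) := by
    rw [hx]; funext w; simp only [hit2]; rw [mul_div_assoc]
  have hy2 : y = fun v : Fin 5 → ℝ =>
      -(v 4) * (fun s => (deriv (deriv f) s)⁻¹) (v 0) := by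
    rw [hy]; funext w; simp only [hit2]; rw [div_eq_mul_inv]
  have hz2 : z = fun v : Fin 5 → ℝ => v 1 - v 2 * v 0
      + v 4 * (fun s => (s * deriv f s - f s) / deriv (deriv f) s) (v 0) := by
    rw [hz]; funext w; simp only [hit2]; rw [mul_div_assoc]
  subst hx2 hy2 hz2 hp
  intro v hX hq
  have hmem : I ∈ nhds (v 0) := hI.mem_nhds hX
  have hf1 : ContDiffOn ℝ (⊤ : ℕ∞) (deriv f) I := hf.deriv_of_isOpen hI (by exact_mod_cast le_top)
  have hf2 : ContDiffOn ℝ (⊤ : ℕ∞) (deriv (deriv f)) I := hf1.deriv_of_isOpen hI (by exact_mod_cast le_top)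
  set X := v 0 with hXdef
  set b := deriv f X with hb
  set c := deriv (deriv f) X with hcdef
  set d := deriv (deriv (deriv f)) X with hd
  have hc : c ≠ 0 := by have := hnd X hX; rwa [hit2] at this
  have hdf : HasDerivAt f b X :=
    ((hf.contDiffAt hmem).differentiableAt (by simp)).hasDerivAt
  have hdb : HasDerivAt (deriv f) c X :=
    ((hf1.contDiffAt hmem).differentiableAt (by simp)).hasDerivAt
  have hdc : HasDerivAt (deriv (deriv f)) d X :=
    ((hf2.contDiffAt hmem).differentiableAt (by simp)).hasDerivAt
  -- one-variable derivatives
  have hg1 : HasDerivAt (fun s => deriv f s / deriv (deriv f) s)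
      ((c * c - b * d) / c ^ 2) X := by
    have h := hdb.div hdc hc
    convert h using 1
    all_goals rfl
  have hg2 : HasDerivAt (fun s => (deriv (deriv f) s)⁻¹) (-d / c ^ 2) X :=
    hdc.inv hc
  have hg3 : HasDerivAt (fun s => (s * deriv f s - f s) / deriv (deriv f) s)
      (((1 * b + X * c - b) * c - (X * b - f X) * d) / c ^ 2) X := by
    have h := (((hasDerivAt_id X).mul hdb).sub hdf).div hdc hc
    convert h using 1
    all_goals rfl
  -- projections
  have hpr : ∀ i : Fin 5, HasFDerivAt (fun w : Fin 5 → ℝ => w i)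
      (prj i) v := fun i =>
    (prj i).hasFDerivAt
  -- full derivatives
  have hxF : HasFDerivAt (fun w : Fin 5 → ℝ =>
      -(w 2) + w 4 * (fun s => deriv f s / deriv (deriv f) s) (w 0))
      (-(prj 2) +
        (v 4 • (((c * c - b * d) / c ^ 2) • prj 0)
          + (b / c) • prj 4)) v :=
    ((hpr 2).neg).add ((hpr 4).mul (by have := hg1.comp_hasFDerivAt v (hpr 0); exact this))
  have hyF : HasFDerivAt (fun w : Fin 5 → ℝ =>
      -(w 4) * (fun s => (deriv (deriv f) s)⁻¹) (w 0))
      ((-(v 4)) • ((-d / c ^ 2) • prj 0)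
        + c⁻¹ • (-(prj 4))) v :=
    ((hpr 4).neg).mul (by have := hg2.comp_hasFDerivAt v (hpr 0); exact this)
  have hzF : HasFDerivAt (fun w : Fin 5 → ℝ => w 1 - w 2 * w 0
      + w 4 * (fun s => (s * deriv f s - f s) / deriv (deriv f) s) (w 0))
      ((prj 1
        - (v 2 • prj 0 + v 0 • prj 2))
        + (v 4 • ((((1 * b + X * c - b) * c - (X * b - f X) * d) / c ^ 2)
            • prj 0)
          + ((X * b - f X) / c) • prj 4)) v :=
    ((hpr 1).sub ((hpr 2).mul (hpr 0))).add
      ((hpr 4).mul (by have := hg3.comp_hasFDerivAt v (hpr 0); exact this))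
  refine ⟨?_, ?_, ?_, ?_, ?_⟩ <;>
  · unfold pd
    rw [hxF.fderiv, hyF.fderiv, hzF.fderiv]
    simp only [ContinuousLinearMap.add_apply, ContinuousLinearMap.sub_apply,
      ContinuousLinearMap.neg_apply, ContinuousLinearMap.smul_apply, prj_apply,
      smul_eq_mul, Pi.single_apply, Fin.reduceEq, reduceIte]
    norm_num
    all_goals field_simp
    all_goals ring
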